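/- Let R = U† Π U and R̃ = R + E, where U is an m×m unitary, Π is the diagonal projection onto the first n coordinates, E is Hermitian with |E_{ij}| ≤ ε for all i,j, and ε < 1/(2m³). Let Ũ be a unitary diagonalizing R̃ as Ũ R̃ Ũ† = Λ with Λ diagonal with non-increasing real diagonal entries. Then ‖Λ − Π‖ + ‖Ũ E Ũ†‖ ≤ 2m³ε, where ‖·‖ is the operator norm. -/

import Mathlib

open Matrix Finset

namespace Stmt15Aux

variable {m : ℕ}

lemma quadE (ε : ℝ) (hε : 0 ≤ ε) (E : Matrix (Fin m) (Fin m) ℂ)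
    (hE : ∀ i j, ‖E i j‖ ≤ ε) (w : Fin m → ℂ) :
    ‖star w ⬝ᵥ E *ᵥ w‖ ≤ (m : ℝ) * ε * ∑ j, ‖w j‖ ^ 2 := by
  have hrw : star w ⬝ᵥ E *ᵥ w = ∑ i, star (w i) * ∑ j, E i j * w j := by
    simp [dotProduct, Matrix.mulVec]
  have h1 : ‖star w ⬝ᵥ E *ᵥ w‖ ≤ ∑ i, ‖w i‖ * (ε * ∑ j, ‖w j‖) := by
    rw [hrw]
    refine (norm_sum_le _ _).trans (Finset.sum_le_sum fun i _ => ?_)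
    rw [norm_mul, norm_star]
    refine mul_le_mul_of_nonneg_left ?_ (norm_nonneg _)
    refine (norm_sum_le _ _).trans ?_
    rw [Finset.mul_sum]
    refine Finset.sum_le_sum fun j _ => ?_
    rw [norm_mul]
    exact mul_le_mul_of_nonneg_right (by simpa using hE i j)
      (norm_nonneg _)
  have h2 : ∑ i, ‖w i‖ * (ε * ∑ j, ‖w j‖) = ε * (∑ j, ‖w j‖) ^ 2 := by
    rw [← Finset.sum_mul]; ring
  have h3 : (∑ j, ‖w j‖) ^ 2 ≤ (m : ℝ) * ∑ j, ‖w j‖ ^ 2 := by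
    simpa using sq_sum_le_card_mul_sum_sq (s := (Finset.univ : Finset (Fin m)))
      (f := fun j => ‖w j‖)
  calc ‖star w ⬝ᵥ E *ᵥ w‖ ≤ ε * (∑ j, ‖w j‖) ^ 2 := by rw [← h2]; exact h1
    _ ≤ ε * ((m:ℝ) * ∑ j, ‖w j‖ ^ 2) := mul_le_mul_of_nonneg_left h3 hε
    _ = (m : ℝ) * ε * ∑ j, ‖w j‖ ^ 2 := by ring

lemma exists_ker (A B : Matrix (Fin m) (Fin m) ℂ) (s t : Finset (Fin m))
    (h : s.card + t.card < m) :
    ∃ w : Fin m → ℂ, w ≠ 0 ∧ (∀ j ∈ s, (A *ᵥ w) j = 0) ∧ (∀ j ∈ t, (B *ᵥ w) j = 0) := by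
  classical
  set L : (Fin m → ℂ) →ₗ[ℂ] ((↥s → ℂ) × (↥t → ℂ)) :=
    ((LinearMap.funLeft ℂ ℂ (Subtype.val : ↥s → Fin m)).comp A.mulVecLin).prod
      ((LinearMap.funLeft ℂ ℂ (Subtype.val : ↥t → Fin m)).comp B.mulVecLin) with hL
  have hrange : Module.finrank ℂ (LinearMap.range L) ≤ s.card + t.card := by
    refine (Submodule.finrank_le _).trans ?_
    simp [Module.finrank_prod]
  have hker : LinearMap.ker L ≠ ⊥ := by
    intro hbot
    have h1 := LinearMap.finrank_range_add_finrank_ker L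
    rw [hbot, finrank_bot] at h1
    simp [Module.finrank_pi] at h1
    omega
  obtain ⟨w, hw, hw0⟩ := Submodule.exists_mem_ne_zero_of_ne_bot hker
  refine ⟨w, hw0, ?_, ?_⟩
  · intro j hj
    have := congrFun (congrArg Prod.fst (LinearMap.mem_ker.mp hw)) ⟨j, hj⟩
    simpa [hL] using this
  · intro j hj
    have := congrFun (congrArg Prod.snd (LinearMap.mem_ker.mp hw)) ⟨j, hj⟩
    simpa [hL] using this

lemma quad_diag (e : Fin m → ℝ) (c : Fin m → ℂ) :
    star c ⬝ᵥ (Matrix.diagonal (fun i => (e i : ℂ))) *ᵥ c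
      = ((∑ j, e j * ‖c j‖ ^ 2 : ℝ) : ℂ) := by
  push_cast
  simp only [dotProduct, Pi.star_apply, Matrix.mulVec_diagonal]
  refine Finset.sum_congr rfl fun j _ => ?_
  have : ((‖c j‖ : ℂ)) ^ 2 = star (c j) * c j := by
    rw [Complex.star_def, ← Complex.normSq_eq_conj_mul_self, Complex.normSq_eq_norm_sq]
    push_cast
    ring
  rw [this]
  ring

lemma conj_dot (M Q : Matrix (Fin m) (Fin m) ℂ) (w : Fin m → ℂ) :
    star w ⬝ᵥ (Mᴴ * Q * M) *ᵥ w = star (M *ᵥ w) ⬝ᵥ Q *ᵥ (M *ᵥ w) := by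
  rw [← Matrix.mulVec_mulVec, ← Matrix.mulVec_mulVec, Matrix.dotProduct_mulVec,
    ← Matrix.star_mulVec]

lemma unit_norm {M : Matrix (Fin m) (Fin m) ℂ} (hM : Mᴴ * M = 1) (w : Fin m → ℂ) :
    ∑ j, ‖(M *ᵥ w) j‖ ^ 2 = ∑ j, ‖w j‖ ^ 2 := by
  have h1 := conj_dot M 1 w
  rw [Matrix.mul_one, hM] at h1
  have h2 : ∀ v : Fin m → ℂ, star v ⬝ᵥ (1 : Matrix (Fin m) (Fin m) ℂ) *ᵥ v
      = ((∑ j, ‖v j‖ ^ 2 : ℝ) : ℂ) := by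
    intro v
    have := quad_diag (fun _ => (1:ℝ)) v
    simpa using this
  rw [h2 w, h2 (M *ᵥ w)] at h1
  exact_mod_cast h1.symm

lemma clm_apply (A : Matrix (Fin m) (Fin m) ℂ) (x : EuclideanSpace ℂ (Fin m)) (i : Fin m) :
    (Matrix.toEuclideanCLM (𝕜 := ℂ) A x) i = (A *ᵥ (fun j => x j)) i := by
  have h := Matrix.ofLp_toEuclideanCLM (𝕜 := ℂ) A x
  have := congrFun h i
  simpa [Matrix.toLin'_apply] using this

lemma norm_sq_eq (x : EuclideanSpace ℂ (Fin m)) : ‖x‖ = Real.sqrt (∑ i, ‖x i‖ ^ 2) := by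
  simpa using EuclideanSpace.norm_eq x

lemma opnorm_le_of_bound (A : Matrix (Fin m) (Fin m) ℂ) (C : ℝ) (hC : 0 ≤ C)
    (h : ∀ x : Fin m → ℂ, ∑ i, ‖(A *ᵥ x) i‖ ^ 2 ≤ C ^ 2 * ∑ i, ‖x i‖ ^ 2) :
    ‖Matrix.toEuclideanCLM (𝕜 := ℂ) A‖ ≤ C := by
  refine ContinuousLinearMap.opNorm_le_bound _ hC fun x => ?_
  rw [norm_sq_eq, norm_sq_eq]
  calc Real.sqrt (∑ i, ‖(Matrix.toEuclideanCLM (𝕜 := ℂ) A x) i‖ ^ 2)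
      = Real.sqrt (∑ i, ‖(A *ᵥ (fun j => x j)) i‖ ^ 2) := by
        simp only [clm_apply]
    _ ≤ Real.sqrt (C ^ 2 * ∑ i, ‖x i‖ ^ 2) := Real.sqrt_le_sqrt (h _)
    _ = C * Real.sqrt (∑ i, ‖x i‖ ^ 2) := by
        rw [Real.sqrt_mul (by positivity), Real.sqrt_sq hC]

lemma opnorm_diag_le (e : Fin m → ℝ) (C : ℝ) (hC : 0 ≤ C) (h : ∀ i, |e i| ≤ C) :
    ‖Matrix.toEuclideanCLM (𝕜 := ℂ) (Matrix.diagonal (fun i => (e i : ℂ)))‖ ≤ C := by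
  refine opnorm_le_of_bound _ C hC fun x => ?_
  rw [Finset.mul_sum]
  refine Finset.sum_le_sum fun i _ => ?_
  rw [Matrix.mulVec_diagonal, norm_mul, mul_pow]
  have h1 : ‖((e i : ℝ) : ℂ)‖ = |e i| := by simp
  rw [h1]
  have h2 : |e i| ^ 2 ≤ C ^ 2 := by nlinarith [abs_nonneg (e i), h i]
  exact mul_le_mul_of_nonneg_right h2 (by positivity)

lemma entry_mulVec_sq_le (ε : ℝ) (hε : 0 ≤ ε) (A : Matrix (Fin m) (Fin m) ℂ)
    (hA : ∀ i j, ‖A i j‖ ≤ ε) (x : Fin m → ℂ) :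
    ∑ i, ‖(A *ᵥ x) i‖ ^ 2 ≤ ((m : ℝ) * ε) ^ 2 * ∑ i, ‖x i‖ ^ 2 := by
  have hS : ∀ i, ‖(A *ᵥ x) i‖ ≤ ε * ∑ j, ‖x j‖ := by
    intro i
    show ‖∑ j, A i j * x j‖ ≤ _
    refine (norm_sum_le _ _).trans ?_
    rw [Finset.mul_sum]
    refine Finset.sum_le_sum fun j _ => ?_
    rw [norm_mul]
    exact mul_le_mul_of_nonneg_right (by simpa using hA i j)
      (norm_nonneg _)
  have hCS : (∑ j, ‖x j‖) ^ 2 ≤ (m : ℝ) * ∑ j, ‖x j‖ ^ 2 := by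
    simpa using sq_sum_le_card_mul_sum_sq (s := (Finset.univ : Finset (Fin m)))
      (f := fun j => ‖x j‖)
  calc ∑ i, ‖(A *ᵥ x) i‖ ^ 2 ≤ ∑ _i : Fin m, (ε * ∑ j, ‖x j‖) ^ 2 := by
        refine Finset.sum_le_sum fun i _ => ?_
        have := hS i
        nlinarith [norm_nonneg ((A *ᵥ x) i)]
    _ = (m : ℝ) * (ε ^ 2 * (∑ j, ‖x j‖) ^ 2) := by
        rw [Finset.sum_const, Finset.card_univ, Fintype.card_fin, nsmul_eq_mul]; ring
    _ ≤ (m : ℝ) * (ε ^ 2 * ((m : ℝ) * ∑ j, ‖x j‖ ^ 2)) := by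
        have hm : (0:ℝ) ≤ (m:ℝ) := by positivity
        exact mul_le_mul_of_nonneg_left (mul_le_mul_of_nonneg_left hCS (sq_nonneg ε)) hm
    _ = ((m : ℝ) * ε) ^ 2 * ∑ i, ‖x i‖ ^ 2 := by ring

lemma opnorm_unitary_le {M : Matrix (Fin m) (Fin m) ℂ} (hM : Mᴴ * M = 1) :
    ‖Matrix.toEuclideanCLM (𝕜 := ℂ) M‖ ≤ 1 := by
  refine opnorm_le_of_bound M 1 zero_le_one fun x => ?_
  rw [unit_norm hM x, one_pow, one_mul]

lemma Npos {w : Fin m → ℂ} (hw : w ≠ 0) : 0 < ∑ j, ‖w j‖ ^ 2 := by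
  obtain ⟨j, hj⟩ := Function.ne_iff.mp hw
  refine Finset.sum_pos' (fun i _ => by positivity) ⟨j, Finset.mem_univ j, ?_⟩
  have : w j ≠ 0 := hj
  exact pow_pos (norm_pos_iff.mpr this) 2

lemma opnorm_entry_le (ε : ℝ) (hε : 0 ≤ ε) (A : Matrix (Fin m) (Fin m) ℂ)
    (hA : ∀ i j, ‖A i j‖ ≤ ε) :
    ‖Matrix.toEuclideanCLM (𝕜 := ℂ) A‖ ≤ (m : ℝ) * ε :=
  opnorm_le_of_bound _ _ (by positivity) (entry_mulVec_sq_le ε hε A hA)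

end Stmt15Aux
set_option maxHeartbeats 2000000 in
open Stmt15Aux in
theorem stmt_15 (m n : ℕ) (hn : n ≤ m) (ε : ℝ) (hε : 0 ≤ ε)
    (hεsmall : ε < 1 / (2 * (m : ℝ) ^ 3))
    (U : Matrix (Fin m) (Fin m) ℂ) (hU : U ∈ Matrix.unitaryGroup (Fin m) ℂ)
    (P : Matrix (Fin m) (Fin m) ℂ)
    (hP : P = Matrix.diagonal (fun i : Fin m => if (i : ℕ) < n then (1 : ℂ) else 0))
    (E : Matrix (Fin m) (Fin m) ℂ) (hEherm : E.IsHermitian)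
    (hE : ∀ i j, ‖E i j‖ ≤ ε)
    (R R' : Matrix (Fin m) (Fin m) ℂ)
    (hR : R = U.conjTranspose * P * U) (hR' : R' = R + E)
    (V : Matrix (Fin m) (Fin m) ℂ) (hV : V ∈ Matrix.unitaryGroup (Fin m) ℂ)
    (d : Fin m → ℝ) (hd : ∀ i j : Fin m, i ≤ j → d j ≤ d i)
    (hdiag : V * R' * V.conjTranspose = Matrix.diagonal (fun i => (d i : ℂ))) :
    ‖Matrix.toEuclideanCLM (𝕜 := ℂ) (Matrix.diagonal (fun i => (d i : ℂ)) - P)‖ +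
      ‖Matrix.toEuclideanCLM (𝕜 := ℂ) (V * E * V.conjTranspose)‖ ≤ 2 * (m : ℝ) ^ 3 * ε := by
  classical
  have hU1 : Uᴴ * U = 1 := by
    have := Matrix.mem_unitaryGroup_iff'.mp hU
    rwa [Matrix.star_eq_conjTranspose] at this
  have hV1 : Vᴴ * V = 1 := by
    have := Matrix.mem_unitaryGroup_iff'.mp hV
    rwa [Matrix.star_eq_conjTranspose] at this
  have hV2 : V * Vᴴ = 1 := by
    have := Matrix.mem_unitaryGroup_iff.mp hV
    rwa [Matrix.star_eq_conjTranspose] at this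
  set πr : Fin m → ℝ := fun j => if (j : ℕ) < n then 1 else 0 with hπr
  have hπ01 : ∀ j, 0 ≤ πr j ∧ πr j ≤ 1 := by
    intro j; simp only [hπr]; split_ifs <;> norm_num
  have hPcoe : P = Matrix.diagonal (fun i => ((πr i : ℝ) : ℂ)) := by
    have hfun : (fun i : Fin m => if (i : ℕ) < n then (1 : ℂ) else 0)
        = fun i => ((πr i : ℝ) : ℂ) := by
      funext i; simp only [hπr]; split_ifs <;> simp
    rw [hP, hfun]
  have hR'' : R' = Vᴴ * Matrix.diagonal (fun i => (d i : ℂ)) * V := by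
    rw [← hdiag]
    have h : Vᴴ * (V * R' * Vᴴ) * V = Vᴴ * V * R' * (Vᴴ * V) := by
      noncomm_ring
    rw [h, hV1, one_mul, mul_one]
  have hEq : ∀ w : Fin m → ℂ,
      |(∑ j, d j * ‖(V *ᵥ w) j‖ ^ 2) - (∑ j, πr j * ‖(U *ᵥ w) j‖ ^ 2)|
        ≤ (m : ℝ) * ε * ∑ j, ‖w j‖ ^ 2 := by
    intro w
    have q1 : star w ⬝ᵥ R' *ᵥ w = ((∑ j, d j * ‖(V *ᵥ w) j‖ ^ 2 : ℝ) : ℂ) := by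
      rw [hR'', conj_dot, quad_diag]
    have q2 : star w ⬝ᵥ R *ᵥ w = ((∑ j, πr j * ‖(U *ᵥ w) j‖ ^ 2 : ℝ) : ℂ) := by
      rw [hR, hPcoe, conj_dot, quad_diag]
    have qE : star w ⬝ᵥ E *ᵥ w = star w ⬝ᵥ R' *ᵥ w - star w ⬝ᵥ R *ᵥ w := by
      rw [hR', Matrix.add_mulVec, dotProduct_add]; ring
    rw [q1, q2, ← Complex.ofReal_sub] at qE
    have hq := quadE ε hε E hE w
    rw [qE] at hq
    rwa [Complex.norm_real, Real.norm_eq_abs] at hq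
  have hDi : ∀ i : Fin m, |d i - πr i| ≤ (m : ℝ) * ε := by
    intro i
    have hm0 : 0 < m := i.pos
    -- single-coordinate vector: global bounds
    obtain ⟨w0, hw0ne, hw0c, -⟩ := exists_ker V U (Finset.univ.erase i) ∅ (by
      rw [Finset.card_empty, Finset.card_erase_of_mem (Finset.mem_univ i),
        Finset.card_univ, Fintype.card_fin]
      omega)
    have hN0 : 0 < ∑ j, ‖w0 j‖ ^ 2 := Npos hw0ne
    have hsum0 : ∑ j, d j * ‖(V *ᵥ w0) j‖ ^ 2 = d i * ∑ j, ‖w0 j‖ ^ 2 := by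
      rw [← unit_norm hV1 w0, Finset.mul_sum]
      refine Finset.sum_congr rfl fun j _ => ?_
      by_cases hji : j = i
      · rw [hji]
      · rw [hw0c j (Finset.mem_erase.mpr ⟨hji, Finset.mem_univ j⟩)]; simp
    have hπu_le : ∑ j, πr j * ‖(U *ᵥ w0) j‖ ^ 2 ≤ ∑ j, ‖w0 j‖ ^ 2 := by
      rw [← unit_norm hU1 w0]
      refine Finset.sum_le_sum fun j _ => ?_
      nlinarith [(hπ01 j).1, (hπ01 j).2, sq_nonneg ‖(U *ᵥ w0) j‖]
    have hπu_ge : 0 ≤ ∑ j, πr j * ‖(U *ᵥ w0) j‖ ^ 2 :=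
      Finset.sum_nonneg fun j _ =>
        mul_nonneg (hπ01 j).1 (by positivity)
    have h0 := hEq w0
    rw [hsum0, abs_le] at h0
    have hub : d i ≤ 1 + (m : ℝ) * ε := by nlinarith [h0.2]
    have hlb : -((m : ℝ) * ε) ≤ d i := by nlinarith [h0.1]
    by_cases hi : (i : ℕ) < n
    · -- need 1 - mε ≤ d i
      obtain ⟨w, hwne, hwc, hwu⟩ := exists_ker V U
        (Finset.univ.filter (fun j => j < i))
        (Finset.univ.filter (fun j : Fin m => n ≤ (j : ℕ))) (by
          have hdisj : Disjoint (Finset.univ.filter (fun j => j < i))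
              (Finset.univ.filter (fun j : Fin m => n ≤ (j : ℕ))) := by
            rw [Finset.disjoint_left]
            intro j hjs hjt
            simp only [Finset.mem_filter, Finset.mem_univ, true_and] at hjs hjt
            have : (j : ℕ) < (i : ℕ) := hjs
            omega
          have hsub : (Finset.univ.filter (fun j => j < i)) ∪
              (Finset.univ.filter (fun j : Fin m => n ≤ (j : ℕ))) ⊆
              Finset.univ.erase i := by
            intro j hj
            simp only [Finset.mem_union, Finset.mem_filter, Finset.mem_univ, true_and] at hj
            refine Finset.mem_erase.mpr ⟨?_, Finset.mem_univ j⟩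
            rcases hj with hj | hj
            · exact Fin.ne_of_lt hj
            · intro hji; rw [hji] at hj; omega
          calc _ = ((Finset.univ.filter (fun j => j < i)) ∪
                (Finset.univ.filter (fun j : Fin m => n ≤ (j : ℕ)))).card :=
              (Finset.card_union_of_disjoint hdisj).symm
            _ ≤ (Finset.univ.erase i).card := Finset.card_le_card hsub
            _ = m - 1 := by
                rw [Finset.card_erase_of_mem (Finset.mem_univ i),
                  Finset.card_univ, Fintype.card_fin]
            _ < m := by omega)
      have hN : 0 < ∑ j, ‖w j‖ ^ 2 := Npos hwne
      have hA : ∑ j, πr j * ‖(U *ᵥ w) j‖ ^ 2 = ∑ j, ‖w j‖ ^ 2 := by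
        rw [← unit_norm hU1 w]
        refine Finset.sum_congr rfl fun j _ => ?_
        by_cases hj : (j : ℕ) < n
        · simp only [hπr]; rw [if_pos hj, one_mul]
        · rw [hwu j (Finset.mem_filter.mpr ⟨Finset.mem_univ j, by omega⟩)]
          simp only [hπr]; rw [if_neg hj]; simp
      have hB : ∑ j, d j * ‖(V *ᵥ w) j‖ ^ 2 ≤ d i * ∑ j, ‖w j‖ ^ 2 := by
        rw [← unit_norm hV1 w, Finset.mul_sum]
        refine Finset.sum_le_sum fun j _ => ?_
        by_cases hj : j < i
        · rw [hwc j (Finset.mem_filter.mpr ⟨Finset.mem_univ j, hj⟩)]; simp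
        · exact mul_le_mul_of_nonneg_right (hd i j (not_lt.mp hj)) (by positivity)
      have h1 := hEq w
      rw [hA, abs_le] at h1
      have hlow : 1 - (m : ℝ) * ε ≤ d i := by nlinarith [h1.1, hB]
      have : πr i = 1 := by simp only [hπr]; rw [if_pos hi]
      rw [this, abs_le]
      constructor <;> nlinarith
    · -- n ≤ i : need d i ≤ mε
      obtain ⟨w, hwne, hwc, hwu⟩ := exists_ker V U
        (Finset.univ.filter (fun j => i < j))
        (Finset.univ.filter (fun j : Fin m => (j : ℕ) < n)) (by
          have hdisj : Disjoint (Finset.univ.filter (fun j => i < j))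
              (Finset.univ.filter (fun j : Fin m => (j : ℕ) < n)) := by
            rw [Finset.disjoint_left]
            intro j hjs hjt
            simp only [Finset.mem_filter, Finset.mem_univ, true_and] at hjs hjt
            have : (i : ℕ) < (j : ℕ) := hjs
            omega
          have hsub : (Finset.univ.filter (fun j => i < j)) ∪
              (Finset.univ.filter (fun j : Fin m => (j : ℕ) < n)) ⊆
              Finset.univ.erase i := by
            intro j hj
            simp only [Finset.mem_union, Finset.mem_filter, Finset.mem_univ, true_and] at hj
            refine Finset.mem_erase.mpr ⟨?_, Finset.mem_univ j⟩
            rcases hj with hj | hj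
            · exact (Fin.ne_of_lt hj).symm
            · intro hji; rw [hji] at hj; omega
          calc _ = ((Finset.univ.filter (fun j => i < j)) ∪
                (Finset.univ.filter (fun j : Fin m => (j : ℕ) < n))).card :=
              (Finset.card_union_of_disjoint hdisj).symm
            _ ≤ (Finset.univ.erase i).card := Finset.card_le_card hsub
            _ = m - 1 := by
                rw [Finset.card_erase_of_mem (Finset.mem_univ i),
                  Finset.card_univ, Fintype.card_fin]
            _ < m := by omega)
      have hN : 0 < ∑ j, ‖w j‖ ^ 2 := Npos hwne
      have hA : ∑ j, πr j * ‖(U *ᵥ w) j‖ ^ 2 = 0 := by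
        refine Finset.sum_eq_zero fun j _ => ?_
        by_cases hj : (j : ℕ) < n
        · rw [hwu j (Finset.mem_filter.mpr ⟨Finset.mem_univ j, hj⟩)]; simp
        · simp only [hπr]; rw [if_neg hj, zero_mul]
      have hB : d i * ∑ j, ‖w j‖ ^ 2 ≤ ∑ j, d j * ‖(V *ᵥ w) j‖ ^ 2 := by
        rw [← unit_norm hV1 w, Finset.mul_sum]
        refine Finset.sum_le_sum fun j _ => ?_
        by_cases hj : i < j
        · rw [hwc j (Finset.mem_filter.mpr ⟨Finset.mem_univ j, hj⟩)]; simp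
        · exact mul_le_mul_of_nonneg_right (hd j i (not_lt.mp hj)) (by positivity)
      have h1 := hEq w
      rw [hA, abs_le] at h1
      have hup : d i ≤ (m : ℝ) * ε := by nlinarith [h1.2, hB]
      have : πr i = 0 := by simp only [hπr]; rw [if_neg hi]
      rw [this, sub_zero, abs_le]
      exact ⟨hlb, hup⟩
  -- assemble
  have hDP : Matrix.diagonal (fun i => (d i : ℂ)) - P
      = Matrix.diagonal (fun i => ((d i - πr i : ℝ) : ℂ)) := by
    rw [hPcoe, Matrix.diagonal_sub]
    congr 1; funext i; push_cast; ring
  have h1 : ‖Matrix.toEuclideanCLM (𝕜 := ℂ) (Matrix.diagonal (fun i => (d i : ℂ)) - P)‖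
      ≤ (m : ℝ) * ε := by
    rw [hDP]
    exact opnorm_diag_le _ _ (by positivity) hDi
  have h2 : ‖Matrix.toEuclideanCLM (𝕜 := ℂ) (V * E * Vᴴ)‖ ≤ (m : ℝ) * ε := by
    have hVh1 : Vᴴᴴ * Vᴴ = 1 := by rw [Matrix.conjTranspose_conjTranspose]; exact hV2
    refine opnorm_le_of_bound _ _ (by positivity) fun x => ?_
    have hcomp : (V * E * Vᴴ) *ᵥ x = V *ᵥ (E *ᵥ (Vᴴ *ᵥ x)) := by
      rw [Matrix.mulVec_mulVec, Matrix.mulVec_mulVec]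
    calc ∑ i, ‖((V * E * Vᴴ) *ᵥ x) i‖ ^ 2
        = ∑ i, ‖(V *ᵥ (E *ᵥ (Vᴴ *ᵥ x))) i‖ ^ 2 := by rw [hcomp]
      _ = ∑ i, ‖(E *ᵥ (Vᴴ *ᵥ x)) i‖ ^ 2 := unit_norm hV1 _
      _ ≤ ((m : ℝ) * ε) ^ 2 * ∑ i, ‖(Vᴴ *ᵥ x) i‖ ^ 2 := entry_mulVec_sq_le ε hε E hE _
      _ = ((m : ℝ) * ε) ^ 2 * ∑ i, ‖x i‖ ^ 2 := by rw [unit_norm hVh1 x]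
  have hm3 : (m : ℝ) ≤ (m : ℝ) ^ 3 := by
    have h := Nat.le_self_pow (n := 3) (by norm_num) m
    calc (m : ℝ) ≤ ((m ^ 3 : ℕ) : ℝ) := Nat.cast_le.mpr h
      _ = (m : ℝ) ^ 3 := by push_cast; ring
  have hfin : (m : ℝ) * ε ≤ (m : ℝ) ^ 3 * ε := mul_le_mul_of_nonneg_right hm3 hε
  linarith
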